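/- For every α ∈ B∞(λ) and every ᾱ ∈ Ω*, one has ‖Dᵀα − Dᵀᾱ‖² ≤ 2ℓ (f̄(α) − f̄(ᾱ)); consequently ‖β*(α) − β*(ᾱ)‖² ≤ (2ℓ/μ²)(f̄(α) − f̄(ᾱ)). -/

import Mathlib

open scoped RealInnerProductSpace
open Matrix

/-- The ℓ∞-ball of radius `lam` in `ℝ^m`. -/
def BinfBall (m : ℕ) (lam : ℝ) : Set (EuclideanSpace ℝ (Fin m)) :=
  {a | ∀ i, |a i| ≤ lam}

/-- Descent lemma: `ℓ`-Lipschitz gradient gives a quadratic upper bound. -/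
lemma descent_lemma_aux {d : ℕ} (f : EuclideanSpace ℝ (Fin d) → ℝ)
    (f' : EuclideanSpace ℝ (Fin d) → EuclideanSpace ℝ (Fin d)) (ℓ : ℝ)
    (hgrad : ∀ x, HasGradientAt f (f' x) x)
    (hlip : ∀ β₁ β₂, ‖f' β₁ - f' β₂‖ ≤ ℓ * ‖β₁ - β₂‖)
    (p u : EuclideanSpace ℝ (Fin d)) (t : ℝ) (ht : 0 ≤ t) :
    f (p + t • u) ≤ f p + t * ⟪f' p, u⟫ + t ^ 2 * (ℓ / 2 * ‖u‖ ^ 2) := by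
  set φ : ℝ → ℝ := fun s => f (p + s • u) - s * ⟪f' p, u⟫ - s ^ 2 * (ℓ / 2 * ‖u‖ ^ 2) with hφ
  have hline : ∀ s : ℝ, HasDerivAt (fun s : ℝ => f (p + s • u)) ⟪f' (p + s • u), u⟫ s := by
    intro s
    have hγ : HasDerivAt (fun s : ℝ => p + s • u) u s := by
      simpa using ((hasDerivAt_id s).smul_const u).const_add p
    have hf := (hgrad (p + s • u)).hasFDerivAt
    have := hf.comp_hasDerivAt s hγ
    simp only [InnerProductSpace.toDual_apply_apply] at this
    exact this
  have hφ' : ∀ s : ℝ, HasDerivAt φ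
      (⟪f' (p + s • u), u⟫ - ⟪f' p, u⟫ - 2 * s * (ℓ / 2 * ‖u‖ ^ 2)) s := by
    intro s
    have h1 : HasDerivAt (fun s : ℝ => s * ⟪f' p, u⟫) ⟪f' p, u⟫ s := by
      simpa using (hasDerivAt_mul_const (c := ⟪f' p, u⟫) (x := s))
    have h2 : HasDerivAt (fun s : ℝ => s ^ 2 * (ℓ / 2 * ‖u‖ ^ 2))
        (2 * s * (ℓ / 2 * ‖u‖ ^ 2)) s := by
      have := (hasDerivAt_pow 2 s).mul_const (ℓ / 2 * ‖u‖ ^ 2)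
      simpa [pow_one] using this
    exact ((hline s).sub h1).sub h2
  have hanti : AntitoneOn φ (Set.Icc 0 t) := by
    apply antitoneOn_of_deriv_nonpos (convex_Icc 0 t)
    · exact fun s _ => (hφ' s).differentiableAt.continuousAt.continuousWithinAt
    · intro s hs
      exact (hφ' s).differentiableAt.differentiableWithinAt
    · intro s hs
      rw [interior_Icc] at hs
      rw [(hφ' s).deriv]
      have hb : ⟪f' (p + s • u) - f' p, u⟫ ≤ ‖f' (p + s • u) - f' p‖ * ‖u‖ :=
        real_inner_le_norm _ _
      have hlb : ‖f' (p + s • u) - f' p‖ ≤ ℓ * ‖s • u‖ := by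
        simpa using hlip (p + s • u) p
      have hsn : ‖s • u‖ = s * ‖u‖ := by
        rw [norm_smul, Real.norm_eq_abs, abs_of_nonneg hs.1.le]
      have : ⟪f' (p + s • u) - f' p, u⟫ ≤ ℓ * (s * ‖u‖) * ‖u‖ := by
        calc ⟪f' (p + s • u) - f' p, u⟫ ≤ ‖f' (p + s • u) - f' p‖ * ‖u‖ := hb
          _ ≤ ℓ * ‖s • u‖ * ‖u‖ := by
              exact mul_le_mul_of_nonneg_right hlb (norm_nonneg _)
          _ = ℓ * (s * ‖u‖) * ‖u‖ := by rw [hsn]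
      rw [inner_sub_left] at this
      nlinarith [this]
  have h0t : φ t ≤ φ 0 := hanti ⟨le_refl 0, ht⟩ ⟨ht, le_refl t⟩ ht
  simp only [hφ, zero_smul, add_zero, zero_mul, zero_pow, sub_zero] at h0t
  · linarith

set_option maxHeartbeats 1000000 in
theorem dual_gap_bounds
    (d m : ℕ) (hd : 0 < d) (hm : 0 < m)
    (f : EuclideanSpace ℝ (Fin d) → ℝ)
    (f' : EuclideanSpace ℝ (Fin d) → EuclideanSpace ℝ (Fin d))
    (μ ℓ : ℝ) (hμ : 0 < μ) (hμℓ : μ ≤ ℓ)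
    (hconv : ConvexOn ℝ Set.univ f)
    (hgrad : ∀ x, HasGradientAt f (f' x) x)
    (hsc : ∀ β₁ β₂ : EuclideanSpace ℝ (Fin d),
      μ * ‖β₁ - β₂‖ ^ 2 ≤ ⟪f' β₁ - f' β₂, β₁ - β₂⟫)
    (hlip : ∀ β₁ β₂ : EuclideanSpace ℝ (Fin d),
      ‖f' β₁ - f' β₂‖ ≤ ℓ * ‖β₁ - β₂‖)
    (D : Matrix (Fin m) (Fin d) ℝ) (lam : ℝ) (hlam : 0 < lam)
    (fstar : EuclideanSpace ℝ (Fin d) → ℝ)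
    (hfstar : ∀ x, IsLUB (Set.range fun β => ⟪x, β⟫ - f β) (fstar x))
    (fbar : EuclideanSpace ℝ (Fin m) → ℝ)
    (hfbar : ∀ a, fbar a = fstar (Matrix.toEuclideanLin (𝕜 := ℝ) Dᵀ a))
    (Ω : Set (EuclideanSpace ℝ (Fin m)))
    (hΩ : Ω = {a | a ∈ BinfBall m lam ∧ ∀ a' ∈ BinfBall m lam, fbar a ≤ fbar a'})
    (βs : EuclideanSpace ℝ (Fin m) → EuclideanSpace ℝ (Fin d))
    (hβs : ∀ α β, f (βs α) - ⟪α, Matrix.toEuclideanLin (𝕜 := ℝ) D (βs α)⟫ ≤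
        f β - ⟪α, Matrix.toEuclideanLin (𝕜 := ℝ) D β⟫) :
    ∀ a ∈ BinfBall m lam, ∀ abar ∈ Ω,
      ‖Matrix.toEuclideanLin (𝕜 := ℝ) Dᵀ a - Matrix.toEuclideanLin (𝕜 := ℝ) Dᵀ abar‖ ^ 2 ≤
        2 * ℓ * (fbar a - fbar abar) ∧
      ‖βs a - βs abar‖ ^ 2 ≤ (2 * ℓ / μ ^ 2) * (fbar a - fbar abar) := by
  have hl : 0 < ℓ := lt_of_lt_of_le hμ hμℓ
  -- adjoint identity
  have hadj : ∀ (c : EuclideanSpace ℝ (Fin m)) (β : EuclideanSpace ℝ (Fin d)),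
      ⟪Matrix.toEuclideanLin (𝕜 := ℝ) Dᵀ c, β⟫ = ⟪c, Matrix.toEuclideanLin (𝕜 := ℝ) D β⟫ := by
    intro c β
    rw [← Matrix.conjTranspose_eq_transpose_of_trivial,
      Matrix.toEuclideanLin_conjTranspose_eq_adjoint]
    exact LinearMap.adjoint_inner_left _ _ _
  -- gradient at the minimizer
  have hgradmin : ∀ α : EuclideanSpace ℝ (Fin m),
      f' (βs α) = Matrix.toEuclideanLin (𝕜 := ℝ) Dᵀ α := by
    intro α
    set x : EuclideanSpace ℝ (Fin d) := Matrix.toEuclideanLin (𝕜 := ℝ) Dᵀ α with hx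
    have hmin : IsLocalMin (fun β => f β - ⟪x, β⟫) (βs α) := by
      apply Filter.Eventually.of_forall
      intro β
      have h := hβs α β
      rw [← hadj α (βs α), ← hadj α β] at h
      exact h
    have hb : HasFDerivAt (fun β : EuclideanSpace ℝ (Fin d) => ⟪x, β⟫)
        (InnerProductSpace.toDual ℝ _ x : EuclideanSpace ℝ (Fin d) →L[ℝ] ℝ) (βs α) :=
      (InnerProductSpace.toDual ℝ _ x).hasFDerivAt
    have ha : HasFDerivAt f
        (InnerProductSpace.toDual ℝ _ (f' (βs α)) : EuclideanSpace ℝ (Fin d) →L[ℝ] ℝ) (βs α) :=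
      (hgrad (βs α)).hasFDerivAt
    have h0 := hmin.hasFDerivAt_eq_zero (ha.sub hb)
    have heq : (InnerProductSpace.toDual ℝ (EuclideanSpace ℝ (Fin d))) (f' (βs α)) =
        (InnerProductSpace.toDual ℝ (EuclideanSpace ℝ (Fin d))) x := sub_eq_zero.mp h0
    exact (InnerProductSpace.toDual ℝ _).injective heq
  -- value of fbar
  have hval : ∀ α : EuclideanSpace ℝ (Fin m),
      fbar α = ⟪Matrix.toEuclideanLin (𝕜 := ℝ) Dᵀ α, βs α⟫ - f (βs α) := by
    intro α
    rw [hfbar]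
    have h := hfstar (Matrix.toEuclideanLin (𝕜 := ℝ) Dᵀ α)
    refine le_antisymm (h.2 ?_) (h.1 ⟨βs α, rfl⟩)
    rintro y ⟨β, rfl⟩
    have h1 := hβs α β
    rw [← hadj α (βs α), ← hadj α β] at h1
    simp only []
    linarith
  intro a ha abar habar
  rw [hΩ] at habar
  obtain ⟨habar_ball, habar_min⟩ := habar
  set x : EuclideanSpace ℝ (Fin d) := Matrix.toEuclideanLin (𝕜 := ℝ) Dᵀ a with hxdef
  set xb : EuclideanSpace ℝ (Fin d) := Matrix.toEuclideanLin (𝕜 := ℝ) Dᵀ abar with hxbdef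
  set u : EuclideanSpace ℝ (Fin d) := x - xb with hu
  set pb : EuclideanSpace ℝ (Fin d) := βs abar with hpb
  set pa : EuclideanSpace ℝ (Fin d) := βs a with hpa
  set gap : ℝ := fbar a - fbar abar with hgap
  -- Step 1 : key lower bound on gap
  have key : ⟪u, pb⟫ + 1 / (2 * ℓ) * ‖u‖ ^ 2 ≤ gap := by
    have hdesc := descent_lemma_aux f f' ℓ hgrad hlip pb u (1 / ℓ) (by positivity)
    rw [hgradmin abar] at hdesc
    have hlow : ⟪x, pb + (1 / ℓ) • u⟫ - f (pb + (1 / ℓ) • u) ≤ fbar a := by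
      rw [hfbar]
      exact (hfstar x).1 ⟨pb + (1 / ℓ) • u, rfl⟩
    have hvb : fbar abar = ⟪xb, pb⟫ - f pb := hval abar
    have hexp : ⟪x, pb + (1 / ℓ) • u⟫ = ⟪x, pb⟫ + (1 / ℓ) * ⟪x, u⟫ := by
      rw [inner_add_right, real_inner_smul_right]
    have hxu : ⟪x, u⟫ - ⟪xb, u⟫ = ‖u‖ ^ 2 := by
      rw [← inner_sub_left, ← hu, real_inner_self_eq_norm_sq]
    have hxpb : ⟪x, pb⟫ - ⟪xb, pb⟫ = ⟪u, pb⟫ := by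
      rw [← inner_sub_left]
    have hc : (1 / ℓ : ℝ) ^ 2 * (ℓ / 2 * ‖u‖ ^ 2) = 1 / (2 * ℓ) * ‖u‖ ^ 2 := by
      field_simp
    rw [hc] at hdesc
    have h1 : (1 / ℓ) * ⟪x, u⟫ - (1 / ℓ) * ⟪xb, u⟫ = (1 / ℓ) * ‖u‖ ^ 2 := by
      rw [← mul_sub, hxu]
    have hfin : (1 / ℓ) * ‖u‖ ^ 2 - 1 / (2 * ℓ) * ‖u‖ ^ 2 = 1 / (2 * ℓ) * ‖u‖ ^ 2 := by
      field_simp; ring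
    linarith
  -- Step 2 : optimality gives nonnegativity of the inner product
  have hopt : 0 ≤ ⟪u, pb⟫ := by
    have hN : (0 : ℝ) ≤ ‖u‖ ^ 2 := sq_nonneg _
    have hmain : ∀ t : ℝ, 0 < t → t ≤ 1 → -(t * ‖u‖ ^ 2 / μ) ≤ ⟪u, pb⟫ := by
      intro t htpos ht1
      set αt : EuclideanSpace ℝ (Fin m) := abar + t • (a - abar) with hαt
      have hball : αt ∈ BinfBall m lam := by
        intro i
        have h1 : |a i| ≤ lam := ha i
        have h2 : |abar i| ≤ lam := habar_ball i
        have hcomp : αt i = abar i + t * (a i - abar i) := by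
          simp [hαt, PiLp.add_apply, PiLp.smul_apply, PiLp.sub_apply, smul_eq_mul]
        rw [hcomp]
        have : abar i + t * (a i - abar i) = (1 - t) * abar i + t * a i := by ring
        rw [this]
        calc |(1 - t) * abar i + t * a i| ≤ |(1 - t) * abar i| + |t * a i| := abs_add_le _ _
          _ = (1 - t) * |abar i| + t * |a i| := by
              rw [abs_mul, abs_mul, abs_of_nonneg (by linarith), abs_of_nonneg htpos.le]
          _ ≤ (1 - t) * lam + t * lam := by
              have := mul_le_mul_of_nonneg_left h2 (by linarith : (0:ℝ) ≤ 1 - t)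
              have := mul_le_mul_of_nonneg_left h1 htpos.le
              nlinarith
          _ = lam := by ring
      have hxt : Matrix.toEuclideanLin (𝕜 := ℝ) Dᵀ αt = xb + t • u := by
        simp [hαt, hu, hxdef, hxbdef, map_add, _root_.map_smul, map_sub, smul_sub]
      set βt : EuclideanSpace ℝ (Fin d) := βs αt with hβt
      have hge : fbar abar ≤ fbar αt := habar_min _ hball
      have hvt : fbar αt = ⟪xb + t • u, βt⟫ - f βt := by
        rw [hval αt, hxt]
      have hlb : ⟪xb, βt⟫ - f βt ≤ fbar abar := by
        rw [hfbar]
        exact (hfstar xb).1 ⟨βt, rfl⟩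
      have hub : 0 ≤ t * ⟪u, βt⟫ := by
        have : fbar αt - fbar abar ≤ ⟪xb + t • u, βt⟫ - ⟪xb, βt⟫ := by
          rw [hvt]; linarith
        have h2 : ⟪xb + t • u, βt⟫ - ⟪xb, βt⟫ = t * ⟪u, βt⟫ := by
          rw [inner_add_left, real_inner_smul_left]; ring
        linarith
      have hβtpos : 0 ≤ ⟪u, βt⟫ := nonneg_of_mul_nonneg_right hub htpos
      -- strong monotonicity bound
      have hsm : μ * ‖βt - pb‖ ^ 2 ≤ t * ‖u‖ * ‖βt - pb‖ := by
        have h1 := hsc βt pb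
        rw [hgradmin αt, hxt] at h1
        have h2 : f' pb = xb := hgradmin abar
        rw [h2] at h1
        have h3 : (xb + t • u) - xb = t • u := by abel
        rw [h3] at h1
        have h4 : ⟪t • u, βt - pb⟫ ≤ ‖t • u‖ * ‖βt - pb‖ := real_inner_le_norm _ _
        have h5 : ‖t • u‖ = t * ‖u‖ := by
          rw [norm_smul, Real.norm_eq_abs, abs_of_nonneg htpos.le]
        rw [h5] at h4
        linarith
      have hr : μ * ‖βt - pb‖ ≤ t * ‖u‖ := by
        rcases eq_or_lt_of_le (norm_nonneg (βt - pb)) with h0 | h0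
        · rw [← h0, mul_zero]; positivity
        · have h1 : (μ * ‖βt - pb‖) * ‖βt - pb‖ ≤ (t * ‖u‖) * ‖βt - pb‖ := by
            calc (μ * ‖βt - pb‖) * ‖βt - pb‖ = μ * ‖βt - pb‖ ^ 2 := by ring
              _ ≤ t * ‖u‖ * ‖βt - pb‖ := hsm
          exact le_of_mul_le_mul_right h1 h0
      have hdiff : ⟪u, βt - pb⟫ ≤ ‖u‖ * ‖βt - pb‖ := real_inner_le_norm _ _
      have hsplit : ⟪u, βt - pb⟫ = ⟪u, βt⟫ - ⟪u, pb⟫ := inner_sub_right _ _ _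
      have hfinal : ⟪u, pb⟫ ≥ -(‖u‖ * ‖βt - pb‖) := by linarith
      have hbound : ‖u‖ * ‖βt - pb‖ ≤ t * ‖u‖ ^ 2 / μ := by
        rw [le_div_iff₀ hμ]
        have := mul_le_mul_of_nonneg_left hr (norm_nonneg u)
        nlinarith [this]
      have : t * ‖u‖ ^ 2 / μ = t * (‖u‖ ^ 2) / μ := by ring
      linarith
    refine le_of_forall_pos_le_add ?_
    intro ε hε
    set t : ℝ := min 1 (ε * μ / (‖u‖ ^ 2 + 1)) with htdef
    have htpos : 0 < t := lt_min one_pos (by positivity)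
    have ht1 : t ≤ 1 := min_le_left _ _
    have ht2 : t ≤ ε * μ / (‖u‖ ^ 2 + 1) := min_le_right _ _
    have h := hmain t htpos ht1
    have hle : t * ‖u‖ ^ 2 / μ ≤ ε := by
      rw [div_le_iff₀ hμ]
      have h1 : t * ‖u‖ ^ 2 ≤ (ε * μ / (‖u‖ ^ 2 + 1)) * ‖u‖ ^ 2 :=
        mul_le_mul_of_nonneg_right ht2 hN
      have h2 : (ε * μ / (‖u‖ ^ 2 + 1)) * ‖u‖ ^ 2 ≤ ε * μ := by
        rw [div_mul_eq_mul_div, div_le_iff₀ (by positivity)]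
        nlinarith [hε.le, hμ.le, hN]
      linarith
    linarith
  -- first conclusion
  have hfirst : ‖u‖ ^ 2 ≤ 2 * ℓ * gap := by
    have h1 : 1 / (2 * ℓ) * ‖u‖ ^ 2 ≤ gap := by linarith
    have h2 := mul_le_mul_of_nonneg_left h1 (by positivity : (0:ℝ) ≤ 2 * ℓ)
    have h3 : 2 * ℓ * (1 / (2 * ℓ) * ‖u‖ ^ 2) = ‖u‖ ^ 2 := by
      field_simp
    calc ‖u‖ ^ 2 = 2 * ℓ * (1 / (2 * ℓ) * ‖u‖ ^ 2) := h3.symm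
      _ ≤ 2 * ℓ * gap := h2
  refine ⟨hfirst, ?_⟩
  -- second conclusion
  have hsm2 : μ * ‖pa - pb‖ ^ 2 ≤ ⟪u, pa - pb⟫ := by
    have h1 := hsc pa pb
    rw [hgradmin a, hgradmin abar] at h1
    exact h1
  have hcs : ⟪u, pa - pb⟫ ≤ ‖u‖ * ‖pa - pb‖ := real_inner_le_norm _ _
  have hr2 : μ * ‖pa - pb‖ ≤ ‖u‖ := by
    rcases eq_or_lt_of_le (norm_nonneg (pa - pb)) with h0 | h0
    · rw [← h0]; simp [norm_nonneg]
    · nlinarith [hsm2, hcs, h0]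
  have hgoal : ‖pa - pb‖ ^ 2 * μ ^ 2 ≤ 2 * ℓ * gap := by
    nlinarith [hr2, hfirst, norm_nonneg (pa - pb), norm_nonneg u, hμ.le,
      mul_le_mul_of_nonneg_left hr2 (mul_nonneg hμ.le (norm_nonneg (pa - pb)))]
  have hμ2 : (0:ℝ) < μ ^ 2 := by positivity
  have : (2 * ℓ / μ ^ 2) * gap = (2 * ℓ * gap) / μ ^ 2 := by ring
  rw [this, le_div_iff₀ hμ2]
  exact hgoal
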